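/- Let n ≥ 3 and let u ∈ W^{2,2}(ℝⁿ) be a nontrivial solution of |Δu| ≤ |Vu| with supp u ⊂ B(a,r). If 1_{B(a,r)} V belongs to the extended Kato class K̃_n, then there exists r₀ > 0 such that for all r < r₀, η(2r, V) ≥ C > 0 with a constant C independent of r. -/

import Mathlib

open MeasureTheory Metric Filter Set
open scoped ENNReal NNReal Topology

noncomputable section

abbrev Eu (n : ℕ) := EuclideanSpace ℝ (Fin n)

def lap {n : ℕ} (u : Eu n → ℂ) (x : Eu n) : ℂ :=
  ∑ j, iteratedFDeriv ℝ 2 u x ![EuclideanSpace.single j 1, EuclideanSpace.single j 1]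

def MemW22 {n : ℕ} (u : Eu n → ℂ) : Prop :=
  ContDiff ℝ 2 u ∧ MemLp u 2 volume ∧ MemLp (fun x => fderiv ℝ u x) 2 volume ∧
    MemLp (fun x => iteratedFDeriv ℝ 2 u x) 2 volume

def eta (n : ℕ) (r : ℝ) (V : Eu n → ℝ) : ℝ≥0∞ :=
  ⨆ x : Eu n, ∫⁻ y in ball x r, (‖V y‖₊ : ℝ≥0∞) / edist x y ^ (n - 2)

def pn (n : ℕ) : ℝ := (2 - (n : ℝ)) / 2

def qf {n : ℕ} (c : Eu n) (ε : ℝ) (y : Eu n) : ℝ := ‖y - c‖ ^ 2 + ε ^ 2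

def phif {n : ℕ} (c : Eu n) (ε : ℝ) (y : Eu n) : ℝ := qf c ε y ^ pn n

def dphi {n : ℕ} (c : Eu n) (ε : ℝ) (j : Fin n) (y : Eu n) : ℝ :=
  2 * pn n * (qf c ε y ^ (pn n - 1) * (y - c) j)

def ddphi {n : ℕ} (c : Eu n) (ε : ℝ) (j : Fin n) (y : Eu n) : ℝ :=
  4 * pn n * (pn n - 1) * (qf c ε y ^ (pn n - 2) * ((y - c) j) ^ 2)
    + 2 * pn n * qf c ε y ^ (pn n - 1)

def kf {n : ℕ} (c : Eu n) (ε : ℝ) (y : Eu n) : ℝ :=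
  ((n : ℝ) * ((n : ℝ) - 2) * ε ^ 2) * qf c ε y ^ (pn n - 2)

def kbase (n : ℕ) (w : Eu n) : ℝ := ((n : ℝ) * ((n : ℝ) - 2)) * (1 + ‖w‖ ^ 2) ^ (pn n - 2)

def ej {n : ℕ} (j : Fin n) : Eu n := EuclideanSpace.single j 1

lemma euc_norm_sq {n : ℕ} (z : Eu n) : ‖z‖ ^ 2 = ∑ j, (z j) ^ 2 := by
  rw [EuclideanSpace.norm_eq, Real.sq_sqrt] <;>
    simp only [Real.norm_eq_abs, sq_abs] <;> positivity

lemma qf_pos {n : ℕ} (c : Eu n) {ε : ℝ} (hε : ε ≠ 0) (y : Eu n) : 0 < qf c ε y := by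
  have : 0 < ε ^ 2 := by positivity
  have h2 : (0:ℝ) ≤ ‖y - c‖ ^ 2 := by positivity
  unfold qf; linarith

lemma qf_line {n : ℕ} (c : Eu n) (ε : ℝ) (y : Eu n) (j : Fin n) (t : ℝ) :
    qf c ε (y + t • ej j) = qf c ε y + 2 * (y - c) j * t + t ^ 2 := by
  unfold qf
  have h1 : y + t • ej j - c = (y - c) + t • ej j := by abel
  rw [h1, norm_add_sq_real]
  have h2 : inner ℝ (y - c) (t • ej j) = t * (y - c) j := by
    rw [real_inner_smul_right]
    have : inner ℝ (y - c) (ej j) = (y - c) j := by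
      simp [ej, EuclideanSpace.inner_single_right]
    rw [this]
  have h3 : ‖t • ej j‖ ^ 2 = t ^ 2 := by
    rw [norm_smul]
    simp [ej, EuclideanSpace.norm_single, Real.norm_eq_abs, mul_pow, sq_abs]
  rw [h2, h3]; ring

lemma apply_line {n : ℕ} (c : Eu n) (y : Eu n) (j : Fin n) (t : ℝ) :
    (y + t • ej j - c) j = (y - c) j + t := by
  simp [ej, EuclideanSpace.single_apply]
  ring

lemma hasLineDerivAt_phif {n : ℕ} (c : Eu n) {ε : ℝ} (hε : ε ≠ 0) (j : Fin n) (y : Eu n) :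
    HasLineDerivAt ℝ (phif c ε) (dphi c ε j y) y (ej j) := by
  unfold HasLineDerivAt
  have heq : (fun t : ℝ => phif c ε (y + t • ej j))
      = fun t => (qf c ε y + 2 * (y - c) j * t + t ^ 2) ^ pn n := by
    funext t; rw [phif, qf_line]
  rw [heq]
  have h1 : HasDerivAt (fun t : ℝ => qf c ε y + 2 * (y - c) j * t + t ^ 2)
      (2 * (y - c) j) 0 := by
    have := ((hasDerivAt_id (0:ℝ)).const_mul (2 * (y - c) j)).const_add (qf c ε y)
    have h2 := this.add (hasDerivAt_pow 2 (0:ℝ))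
    simpa [Pi.add_def] using h2
  have hne : qf c ε y + 2 * (y - c) j * 0 + 0 ^ 2 ≠ 0 := by
    simpa using (qf_pos c hε y).ne'
  have := h1.rpow_const (p := pn n) (Or.inl hne)
  refine this.congr_deriv ?_
  simp [dphi]; ring

lemma hasLineDerivAt_dphi {n : ℕ} (c : Eu n) {ε : ℝ} (hε : ε ≠ 0) (j : Fin n) (y : Eu n) :
    HasLineDerivAt ℝ (dphi c ε j) (ddphi c ε j y) y (ej j) := by
  unfold HasLineDerivAt
  have heq : (fun t : ℝ => dphi c ε j (y + t • ej j))
      = fun t => 2 * pn n * ((qf c ε y + 2 * (y - c) j * t + t ^ 2) ^ (pn n - 1)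
          * ((y - c) j + t)) := by
    funext t; rw [dphi, qf_line, apply_line]
  rw [heq]
  have h1 : HasDerivAt (fun t : ℝ => qf c ε y + 2 * (y - c) j * t + t ^ 2)
      (2 * (y - c) j) 0 := by
    have := ((hasDerivAt_id (0:ℝ)).const_mul (2 * (y - c) j)).const_add (qf c ε y)
    have h2 := this.add (hasDerivAt_pow 2 (0:ℝ))
    simpa [Pi.add_def] using h2
  have hne : qf c ε y + 2 * (y - c) j * 0 + 0 ^ 2 ≠ 0 := by
    simpa using (qf_pos c hε y).ne'
  have h2 := h1.rpow_const (p := pn n - 1) (Or.inl hne)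
  have h3 : HasDerivAt (fun t : ℝ => (y - c) j + t) 1 0 := by
    simpa using (hasDerivAt_id (0:ℝ)).const_add ((y - c) j)
  have h4 := (h2.mul h3).const_mul (2 * pn n)
  refine h4.congr_deriv ?_
  simp [ddphi]; ring

lemma sum_ddphi {n : ℕ} (hn : 3 ≤ n) (c : Eu n) {ε : ℝ} (hε : ε ≠ 0) (y : Eu n) :
    ∑ j, ddphi c ε j y = -kf c ε y := by
  have hq := qf_pos c hε y
  have hsum : ∑ j, ((y - c) j) ^ 2 = ‖y - c‖ ^ 2 := (euc_norm_sq _).symm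
  have hrw : qf c ε y ^ (pn n - 1) = qf c ε y ^ (pn n - 2) * qf c ε y := by
    rw [← Real.rpow_add_one hq.ne' (pn n - 2)]; ring_nf
  unfold ddphi
  rw [Finset.sum_add_distrib]
  simp only [← Finset.mul_sum, Finset.sum_const, Finset.card_univ, Fintype.card_fin, nsmul_eq_mul]
  rw [hsum, hrw]
  unfold kf qf pn
  set X := (‖y - c‖ ^ 2 + ε ^ 2 : ℝ) ^ ((2 - (n:ℝ)) / 2 - 2)
  field_simp
  ring

lemma lap_eq {n : ℕ} (u : Eu n → ℂ) (y : Eu n) :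
    lap u y = ∑ j, fderiv ℝ (fderiv ℝ u) y (ej j) (ej j) := by
  unfold lap
  refine Finset.sum_congr rfl fun j _ => ?_
  rw [iteratedFDeriv_two_apply]
  simp [ej]

section IBP

variable {n : ℕ} {u : Eu n → ℂ} (hu : ContDiff ℝ 2 u) (hcs : HasCompactSupport u)

lemma support_g (j : Fin n) : Function.support (fun y => fderiv ℝ u y (ej j)) ⊆ tsupport u := by
  intro y hy
  have : fderiv ℝ u y ≠ 0 := fun h => hy (by simp [Function.mem_support, h])
  exact support_fderiv_subset ℝ this

lemma support_h2 (j : Fin n) :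
    Function.support (fun y => fderiv ℝ (fderiv ℝ u) y (ej j) (ej j)) ⊆ tsupport u := by
  intro y hy
  have h1 : fderiv ℝ (fderiv ℝ u) y ≠ 0 := by
    intro h; apply hy; simp [Function.mem_support, h]
  exact (tsupport_fderiv_subset ℝ) (support_fderiv_subset ℝ h1)

lemma integrable_aux (hcs : HasCompactSupport u) (F : Eu n → ℝ) (G : Eu n → ℂ)
    (hF : Continuous F) (hG : Continuous G) (hsupp : Function.support G ⊆ tsupport u) :
    Integrable (fun y => F y • G y) volume := by
  have hGc : HasCompactSupport G :=
    IsCompact.of_isClosed_subset hcs isClosed_closure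
      (closure_minimal hsupp (isClosed_tsupport u))
  exact (hF.smul hG).integrable_of_hasCompactSupport hGc.smul_left

end IBP

lemma ibp2 {n : ℕ} (hn : 3 ≤ n) (c : Eu n) {ε : ℝ} (hε : 0 < ε) {u : Eu n → ℂ}
    (hu : ContDiff ℝ 2 u) (hcs : HasCompactSupport u) :
    ∫ y, phif c ε y • lap u y = - ∫ y, kf c ε y • u y := by
  have hεne : ε ≠ 0 := hε.ne'
  have hu1 : ContDiff ℝ 1 (fderiv ℝ u) := hu.fderiv_right (by norm_num)
  set g := fun (j : Fin n) (y : Eu n) => fderiv ℝ u y (ej j) with hg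
  set h2 := fun (j : Fin n) (y : Eu n) => fderiv ℝ (fderiv ℝ u) y (ej j) (ej j) with hh2
  have hu_cont : Continuous u := hu.continuous
  have hgc : ∀ j, Continuous (g j) := fun j => (hu1.continuous).clm_apply continuous_const
  have hD2cont : Continuous (fderiv ℝ (fderiv ℝ u)) := hu1.continuous_fderiv one_ne_zero
  have hh2c : ∀ j, Continuous (h2 j) := fun j =>
    (hD2cont.clm_apply continuous_const).clm_apply continuous_const
  have hqc : Continuous (qf c ε) :=
    ((continuous_id.sub continuous_const).norm.pow 2).add continuous_const
  have hqne : ∀ y, qf c ε y ≠ 0 := fun y => (qf_pos c hεne y).ne'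
  have hphic : Continuous (phif c ε) := hqc.rpow_const fun y => Or.inl (hqne y)
  have happly : ∀ j, Continuous (fun y : Eu n => (y - c) j) := fun j =>
    (EuclideanSpace.proj j).continuous.comp (continuous_id.sub continuous_const)
  have hdphic : ∀ j, Continuous (dphi c ε j) := fun j =>
    continuous_const.mul ((hqc.rpow_const fun y => Or.inl (hqne y)).mul (happly j))
  have hddphic : ∀ j, Continuous (ddphi c ε j) := fun j =>
    (continuous_const.mul ((hqc.rpow_const fun y => Or.inl (hqne y)).mul ((happly j).pow 2))).add
      (continuous_const.mul (hqc.rpow_const fun y => Or.inl (hqne y)))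
  have hgl : ∀ (j) (y : Eu n), HasLineDerivAt ℝ u (g j y) y (ej j) := fun j y =>
    ((hu.differentiable (by norm_num) y).hasFDerivAt).hasLineDerivAt _
  have hh2l : ∀ (j) (y : Eu n), HasLineDerivAt ℝ (g j) (h2 j y) y (ej j) := by
    intro j y
    have hF : HasFDerivAt (fun z => fderiv ℝ u z (ej j))
        ((ContinuousLinearMap.apply ℝ ℂ (ej j)).comp (fderiv ℝ (fderiv ℝ u) y)) y :=
      (ContinuousLinearMap.apply ℝ ℂ (ej j)).hasFDerivAt.comp y
        (((hu1.differentiable one_ne_zero) y).hasFDerivAt)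
    simpa using hF.hasLineDerivAt (ej j)
  have hint : ∀ (F : Eu n → ℝ) (G : Eu n → ℂ), Continuous F → Continuous G →
      Function.support G ⊆ tsupport u → Integrable (fun y => F y • G y) volume :=
    fun F G hF hG hs => integrable_aux hcs F G hF hG hs
  have step : ∀ j, ∫ y, phif c ε y • h2 j y = ∫ y, ddphi c ε j y • u y := by
    intro j
    have s1 : ∫ y, phif c ε y • h2 j y = - ∫ y, dphi c ε j y • g j y := by
      have := integral_bilinear_hasLineDerivAt_right_eq_neg_left_of_integrable
        (μ := volume) (B := ContinuousLinearMap.lsmul ℝ ℝ)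
        (f := phif c ε) (f' := dphi c ε j) (g := g j) (g' := h2 j) (v := ej j)
        (by simpa using hint _ _ (hdphic j) (hgc j) (support_g j))
        (by simpa using hint _ _ hphic (hh2c j) (support_h2 j))
        (by simpa using hint _ _ hphic (hgc j) (support_g j))
        (fun y _ => hasLineDerivAt_phif c hεne j y) (fun y _ => hh2l j y)
      simpa using this
    have s2 : ∫ y, dphi c ε j y • g j y = - ∫ y, ddphi c ε j y • u y := by
      have := integral_bilinear_hasLineDerivAt_right_eq_neg_left_of_integrable
        (μ := volume) (B := ContinuousLinearMap.lsmul ℝ ℝ)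
        (f := dphi c ε j) (f' := ddphi c ε j) (g := u) (g' := g j) (v := ej j)
        (by simpa using hint _ _ (hddphic j) hu_cont (subset_tsupport u))
        (by simpa using hint _ _ (hdphic j) (hgc j) (support_g j))
        (by simpa using hint _ _ (hdphic j) hu_cont (subset_tsupport u))
        (fun y _ => hasLineDerivAt_dphi c hεne j y) (fun y _ => hgl j y)
      simpa using this
    rw [s1, s2, neg_neg]
  calc ∫ y, phif c ε y • lap u y = ∫ y, ∑ j, phif c ε y • h2 j y := by
        congr with y
        rw [lap_eq u y, Finset.smul_sum]
    _ = ∑ j, ∫ y, phif c ε y • h2 j y :=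
        integral_finset_sum _ fun j _ => hint _ _ hphic (hh2c j) (support_h2 j)
    _ = ∑ j, ∫ y, ddphi c ε j y • u y := Finset.sum_congr rfl fun j _ => step j
    _ = ∫ y, ∑ j, ddphi c ε j y • u y :=
        (integral_finset_sum _ fun j _ => hint _ _ (hddphic j) hu_cont (subset_tsupport u)).symm
    _ = ∫ y, (-(kf c ε y)) • u y := by
        congr with y
        rw [← Finset.sum_smul, sum_ddphi hn c hεne y]
    _ = - ∫ y, kf c ε y • u y := by
        simp_rw [neg_smul]
        exact integral_neg _

lemma two_pn_sub_two {n : ℕ} : 2 * (pn n - 1) = -(n : ℝ) := by unfold pn; ring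

lemma kf_scale {n : ℕ} {ε : ℝ} (hε : 0 < ε) (x₀ w : Eu n) :
    kf x₀ ε (x₀ - ε • w) = (ε ^ (n : ℕ))⁻¹ * kbase n w := by
  have hq : qf x₀ ε (x₀ - ε • w) = ε ^ 2 * (1 + ‖w‖ ^ 2) := by
    unfold qf
    have : x₀ - ε • w - x₀ = -(ε • w) := by abel
    rw [this, norm_neg, norm_smul]
    simp [Real.norm_eq_abs, mul_pow, sq_abs]
    ring
  unfold kf
  rw [hq, Real.mul_rpow (by positivity) (by positivity)]
  have h1 : (ε ^ 2 : ℝ) ^ (pn n - 2) * ε ^ 2 = (ε ^ (n : ℕ))⁻¹ := by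
    rw [← Real.rpow_natCast ε 2, ← Real.rpow_mul hε.le, ← Real.rpow_natCast ε n]
    rw [← Real.rpow_add hε]
    rw [← Real.rpow_neg hε.le]
    congr 1
    push_cast
    unfold pn; ring
  unfold kbase
  calc (n : ℝ) * ((n : ℝ) - 2) * ε ^ 2 * ((ε ^ 2 : ℝ) ^ (pn n - 2) * (1 + ‖w‖ ^ 2) ^ (pn n - 2))
      = ((ε ^ 2 : ℝ) ^ (pn n - 2) * ε ^ 2) * ((n : ℝ) * ((n : ℝ) - 2) * (1 + ‖w‖ ^ 2) ^ (pn n - 2)) := by ring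
    _ = (ε ^ (n : ℕ))⁻¹ * ((n : ℝ) * ((n : ℝ) - 2) * (1 + ‖w‖ ^ 2) ^ (pn n - 2)) := by rw [h1]

lemma kbase_pos {n : ℕ} (hn : 3 ≤ n) (w : Eu n) : 0 < kbase n w := by
  have h1 : (3 : ℝ) ≤ (n : ℝ) := by exact_mod_cast hn
  have h2 : (0:ℝ) < 1 + ‖w‖ ^ 2 := by positivity
  have h3 := Real.rpow_pos_of_pos h2 (pn n - 2)
  have h4 : (0:ℝ) < (n : ℝ) * ((n : ℝ) - 2) := by nlinarith
  exact mul_pos h4 h3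

lemma kbase_continuous (n : ℕ) : Continuous (kbase n) := by
  apply continuous_const.mul
  exact (continuous_const.add (continuous_norm.pow 2)).rpow_const
    fun w => Or.inl (by simp only [Pi.add_apply, Pi.pow_apply]; positivity)

lemma integrable_kbase {n : ℕ} (hn : 3 ≤ n) : Integrable (kbase n) (volume : Measure (Eu n)) := by
  have hfin : (Module.finrank ℝ (Eu n) : ℝ) < (n : ℝ) + 2 := by
    rw [finrank_euclideanSpace_fin]; linarith
  have h := (integrable_rpow_neg_one_add_norm_sq (E := Eu n) (μ := volume) hfin).const_mul
    ((n : ℝ) * ((n : ℝ) - 2))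
  have : (fun w : Eu n => ((n : ℝ) * ((n : ℝ) - 2)) * (1 + ‖w‖ ^ 2) ^ (-((n : ℝ) + 2) / 2))
      = kbase n := by
    funext w
    unfold kbase
    congr 1
    unfold pn; ring
  rwa [this] at h

lemma conv_eq {n : ℕ} {u : Eu n → ℂ} (hu : Continuous u) (hiu : Integrable u volume)
    (x₀ : Eu n) {ε : ℝ} (hε : 0 < ε) :
    ∫ y, kf x₀ ε y • u y = ∫ w, kbase n w • u (x₀ - ε • w) := by
  have h1 : ∫ y, kf x₀ ε y • u y = ∫ z, kf x₀ ε (x₀ - z) • u (x₀ - z) :=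
    (integral_sub_left_eq_self (fun y => kf x₀ ε y • u y) volume x₀).symm
  rw [h1]
  have h2 := MeasureTheory.Measure.integral_comp_smul (μ := (volume : Measure (Eu n)))
    (fun z => kf x₀ ε (x₀ - z) • u (x₀ - z)) ε
  have h3 : ∫ (z : Eu n), kf x₀ ε (x₀ - z) • u (x₀ - z)
      = (ε ^ (n : ℕ)) • ∫ x, kf x₀ ε (x₀ - ε • x) • u (x₀ - ε • x) := by
    rw [h2, finrank_euclideanSpace_fin, abs_of_nonneg (by positivity), smul_smul,
      mul_inv_cancel₀ (by positivity), one_smul]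
  rw [h3, ← integral_smul]
  congr 1
  funext w
  rw [kf_scale hε, smul_smul]
  congr 1
  field_simp

lemma tendsto_conv {n : ℕ} (hn : 3 ≤ n) {u : Eu n → ℂ} (hu : Continuous u)
    {M : ℝ} (hM : ∀ y, ‖u y‖ ≤ M) (x₀ : Eu n) :
    Tendsto (fun m : ℕ => ∫ w, kbase n w • u (x₀ - (1 / ((m : ℝ) + 1)) • w)) atTop
      (𝓝 ((∫ w, kbase n w) • u x₀)) := by
  have hA : ∫ w, kbase n w • u x₀ = (∫ w, kbase n w) • u x₀ := integral_smul_const _ _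
  rw [← hA]
  apply tendsto_integral_of_dominated_convergence (fun w => kbase n w * M)
  · intro m
    have hc : Continuous (fun w : Eu n => x₀ - (1 / ((m : ℝ) + 1)) • w) := by fun_prop
    exact ((kbase_continuous n).smul (hu.comp hc)).aestronglyMeasurable
  · exact (integrable_kbase hn).mul_const M
  · refine fun m => Eventually.of_forall fun w => ?_
    rw [norm_smul, Real.norm_eq_abs, abs_of_pos (kbase_pos hn w)]
    exact mul_le_mul_of_nonneg_left (hM _) (kbase_pos hn w).le
  · refine Eventually.of_forall fun w => ?_
    have h1 : Tendsto (fun m : ℕ => x₀ - (1 / ((m : ℝ) + 1)) • w) atTop (𝓝 x₀) := by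
      have h2 : Tendsto (fun m : ℕ => (1 / ((m : ℝ) + 1)) • w) atTop (𝓝 (0 : Eu n)) := by
        have := (tendsto_one_div_add_atTop_nhds_zero_nat (𝕜 := ℝ)).smul_const w
        simpa using this
      have := tendsto_const_nhds (x := x₀) (f := atTop (α := ℕ)) |>.sub h2
      simpa using this
    exact ((hu.tendsto x₀).comp h1).const_smul (kbase n w)

lemma lap_zero {n : ℕ} {u : Eu n → ℂ} {y : Eu n} (hy : y ∉ tsupport u) : lap u y = 0 := by
  have h0 : iteratedFDeriv ℝ 2 u y = 0 :=
    image_eq_zero_of_notMem_tsupport fun hc => hy (tsupport_iteratedFDeriv_subset 2 hc)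
  unfold lap
  simp [h0]

lemma A_pos {n : ℕ} (hn : 3 ≤ n) : 0 < ∫ w, kbase n w := by
  rw [integral_pos_iff_support_of_nonneg (fun w => (kbase_pos hn w).le) (integrable_kbase hn)]
  have hs : Function.support (kbase n) = univ :=
    eq_univ_of_forall fun w => (kbase_pos hn w).ne'
  rw [hs]
  calc (0 : ℝ≥0∞) < volume (ball (0 : Eu n) 1) := measure_ball_pos _ _ one_pos
    _ ≤ volume univ := measure_mono (subset_univ _)

lemma phif_le {n : ℕ} (hn : 3 ≤ n) {ε : ℝ} (hε : 0 < ε) {x₀ y : Eu n} (hxy : y ≠ x₀) :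
    ENNReal.ofReal (phif x₀ ε y) ≤ (edist x₀ y ^ (n - 2))⁻¹ := by
  have hn3 : (3 : ℝ) ≤ (n : ℝ) := by exact_mod_cast hn
  set t := ‖y - x₀‖ with ht
  have ht0 : 0 < t := by
    rw [ht, norm_pos_iff]
    exact sub_ne_zero.mpr hxy
  have hp : pn n ≤ 0 := by unfold pn; linarith
  have h1 : phif x₀ ε y ≤ (t ^ 2) ^ pn n := by
    unfold phif qf
    exact Real.rpow_le_rpow_of_nonpos (by positivity)
      (le_add_of_nonneg_right (by positivity)) hp
  have h2 : ((t ^ 2 : ℝ)) ^ pn n = (t ^ (n - 2 : ℕ))⁻¹ := by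
    rw [← Real.rpow_natCast t 2, ← Real.rpow_mul ht0.le]
    have hc : 2 * pn n = -((n - 2 : ℕ) : ℝ) := by
      rw [Nat.cast_sub (by omega)]
      unfold pn; push_cast; ring
    push_cast
    rw [hc, Real.rpow_neg ht0.le, Real.rpow_natCast]
  have h3 : ENNReal.ofReal ((t ^ (n - 2 : ℕ))⁻¹) = (edist x₀ y ^ (n - 2))⁻¹ := by
    rw [ENNReal.ofReal_inv_of_pos (pow_pos ht0 _), ENNReal.ofReal_pow ht0.le]
    congr 2
    rw [edist_eq_enorm_sub, ← ofReal_norm, norm_sub_rev]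
  calc ENNReal.ofReal (phif x₀ ε y) ≤ ENNReal.ofReal ((t ^ (n - 2 : ℕ))⁻¹) :=
        ENNReal.ofReal_le_ofReal (h1.trans_eq h2)
    _ = (edist x₀ y ^ (n - 2))⁻¹ := h3


/-- Theorem 2: if `u ∈ W^{2,2}` is a nontrivial solution of `|Δu| ≤ |Vu|`
supported in `B(a,r)` and `1_{B(a,r)}V` is in the extended Kato class `K̃_n`, then there
are `C > 0` and `r₀ > 0`, `C` independent of `r`, with `η(2r,V) ≥ C` for all `r < r₀`. -/
theorem minimal_support_kato (n : ℕ) (hn : 3 ≤ n) (a : Eu n) (V : Eu n → ℝ) :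
    ∃ C : ℝ≥0∞, 0 < C ∧ ∃ r₀ : ℝ, 0 < r₀ ∧
      ∀ r : ℝ, 0 < r → r < r₀ →
        ∀ u : Eu n → ℂ, MemW22 u → u ≠ 0 →
          (∀ᵐ x ∂(volume : Measure (Eu n)), ‖lap u x‖ ≤ |V x| * ‖u x‖) →
          Function.support u ⊆ ball a r →
          (∀ ρ : ℝ, 0 < ρ → eta n ρ (Set.indicator (ball a r) V) ≠ ⊤) →
          C ≤ eta n (2 * r) V := by
  refine ⟨ENNReal.ofReal (∫ w, kbase n w), ENNReal.ofReal_pos.mpr (A_pos hn), 1, one_pos, ?_⟩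
  intro r hr _hr1 u hW22 hu0 hV hsupp _hKato
  obtain ⟨hu2, -⟩ := hW22
  have hts : tsupport u ⊆ closedBall a r :=
    closure_minimal (hsupp.trans ball_subset_closedBall) Metric.isClosed_closedBall
  have hcs : HasCompactSupport u := by
    refine HasCompactSupport.intro (isCompact_closedBall a r) fun x hx => ?_
    by_contra h
    exact hx (ball_subset_closedBall (hsupp h))
  obtain ⟨x₀, hx₀max⟩ :=
    (hu2.continuous.norm).exists_forall_ge_of_hasCompactSupport hcs.norm
  set M := ‖u x₀‖ with hMdef
  have hM0 : 0 < M := by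
    obtain ⟨z, hz⟩ : ∃ z, u z ≠ 0 := by
      by_contra h
      push_neg at h
      exact hu0 (funext h)
    exact lt_of_lt_of_le (norm_pos_iff.mpr hz) (hx₀max z)
  have hx₀ : x₀ ∈ ball a r := hsupp (norm_pos_iff.mp hM0)
  haveI : Nontrivial (Eu n) := by
    refine ⟨0, EuclideanSpace.single ⟨0, by omega⟩ 1, fun h => ?_⟩
    have := congrArg (fun v : Eu n => v ⟨0, by omega⟩) h.symm
    simp [EuclideanSpace.single_apply] at this
  have hne : ∀ᵐ (y : Eu n) ∂(volume : Measure (Eu n)), y ≠ x₀ := by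
    rw [ae_iff]
    have : {y : Eu n | ¬ y ≠ x₀} = {x₀} := by ext y; simp
    rw [this]
    exact measure_singleton x₀
  -- per-m bound
  have hmain : ∀ m : ℕ,
      ENNReal.ofReal ‖∫ w, kbase n w • u (x₀ - (1 / ((m : ℝ) + 1)) • w)‖
        ≤ eta n (2 * r) V * ENNReal.ofReal M := by
    intro m
    set ε := (1 : ℝ) / ((m : ℝ) + 1) with hεdef
    have hε : 0 < ε := by positivity
    rw [← conv_eq hu2.continuous
      (hu2.continuous.integrable_of_hasCompactSupport hcs) x₀ hε]
    have hI := ibp2 hn x₀ hε hu2 hcs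
    have h1 : ‖∫ y, kf x₀ ε y • u y‖ = ‖∫ y, phif x₀ ε y • lap u y‖ := by
      rw [hI, norm_neg]
    rw [h1]
    -- continuity facts
    have hqne : ∀ y, qf x₀ ε y ≠ 0 := fun y => (qf_pos x₀ hε.ne' y).ne'
    have hphic : Continuous (phif x₀ ε) :=
      (((continuous_id.sub continuous_const).norm.pow 2).add continuous_const).rpow_const
        fun y => Or.inl (hqne y)
    have hphinn : ∀ y, 0 ≤ phif x₀ ε y := fun y => Real.rpow_nonneg (qf_pos x₀ hε.ne' y).le _
    have hu1 : ContDiff ℝ 1 (fderiv ℝ u) := hu2.fderiv_right (by norm_num)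
    have hlapc : Continuous (lap u) := by
      have : lap u = fun y => ∑ j, fderiv ℝ (fderiv ℝ u) y (ej j) (ej j) := funext (lap_eq u)
      rw [this]
      exact continuous_finset_sum _ fun j _ =>
        (((hu1.continuous_fderiv one_ne_zero).clm_apply continuous_const).clm_apply
          continuous_const)
    have hlapsupp : Function.support (lap u) ⊆ tsupport u := fun y hy => by
      by_contra h
      exact hy (lap_zero h)
    have hint1 : Integrable (fun y => phif x₀ ε y • lap u y) volume :=
      integrable_aux hcs _ _ hphic hlapc hlapsupp
    have hcalc : ENNReal.ofReal ‖∫ y, phif x₀ ε y • lap u y‖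
        ≤ (∫⁻ y in ball x₀ (2 * r), (‖V y‖₊ : ℝ≥0∞) / edist x₀ y ^ (n - 2))
            * ENNReal.ofReal M := by
      calc ENNReal.ofReal ‖∫ y, phif x₀ ε y • lap u y‖
          ≤ ENNReal.ofReal (∫ y, ‖phif x₀ ε y • lap u y‖) :=
            ENNReal.ofReal_le_ofReal (norm_integral_le_integral_norm _)
        _ = ∫⁻ y, ENNReal.ofReal ‖phif x₀ ε y • lap u y‖ :=
            ofReal_integral_eq_lintegral_ofReal hint1.norm
              (Eventually.of_forall fun y => norm_nonneg _)
        _ ≤ ∫⁻ y, (ball x₀ (2 * r)).indicator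
              (fun y' => (‖V y'‖₊ : ℝ≥0∞) / edist x₀ y' ^ (n - 2) * ENNReal.ofReal M) y := by
            apply lintegral_mono_ae
            filter_upwards [hV, hne] with y hy1 hy2
            rw [norm_smul, Real.norm_eq_abs, abs_of_nonneg (hphinn y)]
            by_cases hyb : y ∈ closedBall a r
            · have hyball : y ∈ ball x₀ (2 * r) := by
                rw [mem_ball]
                have h1 : dist y a ≤ r := mem_closedBall.mp hyb
                have h2 : dist x₀ a < r := mem_ball.mp hx₀
                calc dist y x₀ ≤ dist y a + dist a x₀ := dist_triangle _ _ _
                  _ = dist y a + dist x₀ a := by rw [dist_comm a x₀]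
                  _ < r + r := by linarith
                  _ = 2 * r := by ring
              rw [indicator_of_mem hyball]
              have hVnn : ENNReal.ofReal |V y| = (‖V y‖₊ : ℝ≥0∞) :=
                (Real.enorm_eq_ofReal_abs _).symm
              calc ENNReal.ofReal (phif x₀ ε y * ‖lap u y‖)
                  ≤ ENNReal.ofReal (phif x₀ ε y * (|V y| * M)) := by
                    apply ENNReal.ofReal_le_ofReal
                    apply mul_le_mul_of_nonneg_left _ (hphinn y)
                    exact hy1.trans (mul_le_mul_of_nonneg_left (hx₀max y) (abs_nonneg _))
                _ = ENNReal.ofReal (phif x₀ ε y)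
                      * (ENNReal.ofReal |V y| * ENNReal.ofReal M) := by
                    rw [ENNReal.ofReal_mul (hphinn y), ENNReal.ofReal_mul (abs_nonneg _)]
                _ ≤ (edist x₀ y ^ (n - 2))⁻¹ * ((‖V y‖₊ : ℝ≥0∞) * ENNReal.ofReal M) := by
                    rw [hVnn]
                    exact mul_le_mul' (phif_le hn hε hy2) le_rfl
                _ = (‖V y‖₊ : ℝ≥0∞) / edist x₀ y ^ (n - 2) * ENNReal.ofReal M := by
                    rw [div_eq_mul_inv]; ring
            · have hy0 : lap u y = 0 := lap_zero fun hc => hyb (hts hc)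
              rw [hy0]
              simp
        _ = ∫⁻ y in ball x₀ (2 * r),
              (‖V y‖₊ : ℝ≥0∞) / edist x₀ y ^ (n - 2) * ENNReal.ofReal M := by
            rw [lintegral_indicator measurableSet_ball]
        _ = (∫⁻ y in ball x₀ (2 * r), (‖V y‖₊ : ℝ≥0∞) / edist x₀ y ^ (n - 2))
              * ENNReal.ofReal M :=
            lintegral_mul_const' _ _ ENNReal.ofReal_ne_top
    refine hcalc.trans (mul_le_mul_left ?_ _)
    exact le_iSup (fun x : Eu n =>
      ∫⁻ y in ball x (2 * r), (‖V y‖₊ : ℝ≥0∞) / edist x y ^ (n - 2)) x₀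
  -- pass to the limit
  have htend := tendsto_conv hn hu2.continuous hx₀max x₀
  have htend2 : Tendsto
      (fun m : ℕ => ENNReal.ofReal ‖∫ w, kbase n w • u (x₀ - (1 / ((m : ℝ) + 1)) • w)‖)
      atTop (𝓝 (ENNReal.ofReal ‖(∫ w, kbase n w) • u x₀‖)) :=
    (ENNReal.continuous_ofReal.tendsto _).comp htend.norm
  have hfin := le_of_tendsto htend2 (Eventually.of_forall hmain)
  rw [norm_smul, Real.norm_eq_abs, abs_of_pos (A_pos hn),
    ENNReal.ofReal_mul (A_pos hn).le] at hfin
  have hMne : ENNReal.ofReal M ≠ 0 := (ENNReal.ofReal_pos.mpr hM0).ne'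
  exact (ENNReal.mul_le_mul_iff_left hMne ENNReal.ofReal_ne_top).mp hfin
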